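/- For any word w over {x_0^{±1}, x_1^{±1}} of length n, the standard form of w with respect to Σ is p q^{-1} where p, q are MP-words, |p q^{-1}| = n, and every subscript occurring in p q^{-1} is at most n. -/

import Mathlib

abbrev Letter := ℕ × Bool
abbrev Word := List Letter

def pos (i : ℕ) : Letter := (i, true)
def neg (i : ℕ) : Letter := (i, false)

/-- The rewriting rules of the system Σ. -/
inductive SigmaRule : Word → Word → Prop
  | cancel (i : ℕ) : SigmaRule [neg i, pos i] [pos i, neg i]
  | negPos (i j : ℕ) (h : i < j) : SigmaRule [neg i, pos j] [pos (j+1), neg i]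
  | posNegInv (i j : ℕ) (h : i < j) : SigmaRule [neg j, pos i] [pos i, neg (j+1)]
  | posPos (i j : ℕ) (h : i < j) : SigmaRule [pos j, pos i] [pos i, pos (j+1)]
  | negNeg (i j : ℕ) (h : i < j) : SigmaRule [neg i, neg j] [neg (j+1), neg i]

/-- One rewriting step: replace an occurrence of a left-hand side by the right-hand side. -/
def Step (u v : Word) : Prop :=
  ∃ a b l r : Word, SigmaRule l r ∧ u = a ++ l ++ b ∧ v = a ++ r ++ b

/-- A word is Σ-irreducible if no rule applies. -/
def SigmaIrreducible (w : Word) : Prop := ∀ v, ¬ Step w v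

/-- Maximal subscript occurring in a positive word (0 for the empty word). -/
def mu (l : List ℕ) : ℕ := l.foldr max 0

/- ### Auxiliary development -/

def Pc (l : Word) : ℕ := (l.filter (fun x => x.2 = true)).length
def Nc (l : Word) : ℕ := (l.filter (fun x => x.2 = false)).length

lemma Pc_append (a b : Word) : Pc (a ++ b) = Pc a + Pc b := by
  simp [Pc, List.filter_append]
lemma Nc_append (a b : Word) : Nc (a ++ b) = Nc a + Nc b := by
  simp [Nc, List.filter_append]
lemma Pc_le (a : Word) : Pc a ≤ a.length := List.length_filter_le _ _
lemma Nc_le (a : Word) : Nc a ≤ a.length := List.length_filter_le _ _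

/-- The key invariant: every letter's subscript is bounded by `1 + #pos before + #neg after`. -/
def WInv (w : Word) : Prop := ∀ a x c, w = a ++ x :: c → x.1 ≤ 1 + Pc a + Nc c

lemma inv_transfer (A B : Word) (l1 l2 r1 r2 : Letter)
    (hsP : Pc [r1, r2] = Pc [l1, l2]) (hsN : Nc [r1, r2] = Nc [l1, l2])
    (hkey : ∀ pA nB : ℕ,
      l1.1 ≤ 1 + pA + Nc [l2] + nB → l2.1 ≤ 1 + pA + Pc [l1] + nB →
      r1.1 ≤ 1 + pA + Nc [r2] + nB ∧ r2.1 ≤ 1 + pA + Pc [r1] + nB)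
    (hInv : WInv (A ++ [l1, l2] ++ B)) : WInv (A ++ [r1, r2] ++ B) := by
  have h1 := hInv A l1 (l2 :: B) (by simp)
  have h2 := hInv (A ++ [l1]) l2 B (by simp)
  rw [Pc_append] at h2
  have hN2 : Nc (l2 :: B) = Nc [l2] + Nc B := Nc_append [l2] B
  obtain ⟨k1, k2⟩ := hkey (Pc A) (Nc B) (by omega) (by omega)
  intro a x c heq
  rw [List.append_assoc] at heq
  rcases List.append_eq_append_iff.mp heq with ⟨a', ha, hb⟩ | ⟨c', ha, hb⟩
  · -- a = A ++ a',  [r1,r2] ++ B = a' ++ x :: c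
    subst ha
    match a', hb with
    | [], hb =>
      obtain ⟨rfl, rfl⟩ : r1 = x ∧ r2 :: B = c := by
        simpa using hb
      have := Nc_append [r2] B
      rw [Pc_append] at *
      simp only [List.singleton_append] at this
      rw [this]
      simp [Pc] at k1 ⊢
      omega
    | [y], hb =>
      obtain ⟨rfl, rfl, rfl⟩ : r1 = y ∧ r2 = x ∧ B = c := by
        simpa using hb
      rw [Pc_append]
      omega
    | y :: z :: a'', hb =>
      obtain ⟨rfl, rfl, hB⟩ : r1 = y ∧ r2 = z ∧ B = a'' ++ x :: c := by
        simpa using hb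
      have := hInv (A ++ [l1, l2] ++ a'') x c (by rw [hB]; simp)
      rw [Pc_append, Pc_append] at this
      have e : A ++ (r1 :: r2 :: a'') = A ++ [r1, r2] ++ a'' := by simp
      rw [e, Pc_append, Pc_append]
      omega
  · -- A = a ++ c', x :: c = c' ++ [r1,r2] ++ B
    match c', ha, hb with
    | [], ha, hb =>
      obtain ⟨rfl, rfl⟩ : r1 = x ∧ r2 :: B = c := by simpa using hb.symm
      simp only [List.append_nil] at ha
      subst ha
      have := Nc_append [r2] B
      simp only [List.singleton_append] at this
      rw [this]
      simp [Pc] at k1 ⊢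
      omega
    | z :: c'', ha, hb =>
      simp only [List.cons_append] at hb
      injection hb with hxz hc
      subst hxz
      have hx := hInv a x (c'' ++ [l1, l2] ++ B) (by rw [ha]; simp)
      rw [Nc_append, Nc_append] at hx
      have hcc : Nc c = Nc c'' + Nc [r1, r2] + Nc B := by
        rw [hc]
        rw [show (c'' ++ r1 :: r2 :: ([] ++ B)) = (c'' ++ [r1, r2]) ++ B by simp, Nc_append, Nc_append]
      omega

lemma step_inv {u v : Word} (h : Step u v) (hu : WInv u) : WInv v := by
  obtain ⟨A, B, l, rr, hrule, hu', hv'⟩ := h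
  subst hu' hv'
  cases hrule with
  | cancel i =>
      exact inv_transfer A B _ _ _ _ (by simp [Pc, pos, neg]) (by simp [Nc, pos, neg])
        (fun pA nB h1 h2 => by simp [Pc, Nc, pos, neg] at *; omega) hu
  | negPos i j hij =>
      exact inv_transfer A B _ _ _ _ (by simp [Pc, pos, neg]) (by simp [Nc, pos, neg])
        (fun pA nB h1 h2 => by simp [Pc, Nc, pos, neg] at *; omega) hu
  | posNegInv i j hij =>
      exact inv_transfer A B _ _ _ _ (by simp [Pc, pos, neg]) (by simp [Nc, pos, neg])
        (fun pA nB h1 h2 => by simp [Pc, Nc, pos, neg] at *; omega) hu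
  | posPos i j hij =>
      exact inv_transfer A B _ _ _ _ (by simp [Pc, pos, neg]) (by simp [Nc, pos, neg])
        (fun pA nB h1 h2 => by simp [Pc, Nc, pos, neg] at *; omega) hu
  | negNeg i j hij =>
      exact inv_transfer A B _ _ _ _ (by simp [Pc, pos, neg]) (by simp [Nc, pos, neg])
        (fun pA nB h1 h2 => by simp [Pc, Nc, pos, neg] at *; omega) hu

lemma step_len {u v : Word} (h : Step u v) : v.length = u.length := by
  obtain ⟨A, B, l, rr, hrule, hu', hv'⟩ := h
  subst hu' hv'
  have : l.length = rr.length := by cases hrule <;> rfl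
  simp [this]

lemma rtg_inv_len {u v : Word} (h : Relation.ReflTransGen Step u v) :
    (WInv u → WInv v) ∧ v.length = u.length := by
  induction h with
  | refl => exact ⟨id, rfl⟩
  | tail _ hstep ih =>
      exact ⟨fun h => step_inv hstep (ih.1 h), by rw [step_len hstep, ih.2]⟩

/-- Local condition forced by irreducibility on adjacent letters. -/
def Crel (x y : Letter) : Prop :=
  (x.2 = true → y.2 = true → x.1 ≤ y.1) ∧
  (x.2 = false → y.2 = false → y.1 ≤ x.1) ∧
  ¬(x.2 = false ∧ y.2 = true)

lemma C_of_irr (x y : Letter) (t : Word) (h : SigmaIrreducible (x :: y :: t)) : Crel x y := by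
  obtain ⟨i, bx⟩ := x; obtain ⟨j, byy⟩ := y
  have mk : ∀ l rr, SigmaRule l rr → l = [(i, bx), (j, byy)] → False := by
    intro l rr hrule hl
    exact h (rr ++ t) ⟨[], t, l, rr, hrule, by simp [hl], by simp⟩
  cases bx <;> cases byy <;> simp [Crel]
  · -- neg i, neg j : need j ≤ i
    by_contra hlt
    exact mk _ _ (SigmaRule.negNeg i j (by omega)) (by simp [pos, neg])
  · -- neg i, pos j : impossible
    rcases lt_trichotomy i j with hij | rfl | hji
    · exact mk _ _ (SigmaRule.negPos i j hij) (by simp [pos, neg])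
    · exact mk _ _ (SigmaRule.cancel i) (by simp [pos, neg])
    · exact mk _ _ (SigmaRule.posNegInv j i hji) (by simp [pos, neg])
  · -- pos i, pos j : need i ≤ j
    by_contra hlt
    exact mk _ _ (SigmaRule.posPos j i (by omega)) (by simp [pos, neg])

lemma tail_irr {x : Letter} {t : Word} (h : SigmaIrreducible (x :: t)) : SigmaIrreducible t := by
  rintro v ⟨a, b, l, rr, hrule, h1, h2⟩
  exact h (x :: v) ⟨x :: a, b, l, rr, hrule, by simp [h1], by simp [h2]⟩

lemma chain_of_irr : ∀ t : Word, SigmaIrreducible t → List.Chain' Crel t := by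
  intro t
  induction t with
  | nil => intro _; simp [List.Chain']
  | cons x t ih =>
      intro h
      cases t with
      | nil => simp [List.Chain']
      | cons y t' =>
          rw [List.Chain', List.isChain_cons_cons]
          exact ⟨C_of_irr x y t' h, ih (tail_irr h)⟩

lemma structure_of_chain : ∀ t : Word, List.Chain' Crel t →
    ∃ p s : List ℕ, List.Pairwise (· ≤ ·) p ∧ List.Pairwise (· ≥ ·) s ∧
      t = p.map pos ++ s.map neg := by
  intro t
  induction t with
  | nil => exact fun _ => ⟨[], [], by simp, by simp, by simp⟩
  | cons x t ih =>
      intro h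
      obtain ⟨hhd, htl⟩ := List.isChain_cons.mp h
      obtain ⟨p, s, hp, hs, ht⟩ := ih htl
      obtain ⟨i, bx⟩ := x
      cases bx with
      | true =>
          cases p with
          | nil =>
              exact ⟨[i], s, by simp, hs, by simp [ht, pos]⟩
          | cons j p' =>
              have hC : Crel (i, true) (pos j) := hhd (pos j) (by rw [ht]; simp)
              have hij : i ≤ j := hC.1 rfl rfl
              refine ⟨i :: j :: p', s, ?_, hs, by simp [ht, pos]⟩
              rw [List.pairwise_cons]
              refine ⟨?_, hp⟩
              intro b hb
              rcases List.mem_cons.mp hb with rfl | hb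
              · exact hij
              · exact hij.trans (List.rel_of_pairwise_cons hp hb)
      | false =>
          cases p with
          | cons j p' =>
              have hC : Crel (i, false) (pos j) := hhd (pos j) (by rw [ht]; simp)
              exact absurd ⟨rfl, rfl⟩ hC.2.2
          | nil =>
              simp only [List.map_nil, List.nil_append] at ht
              cases s with
              | nil => exact ⟨[], [i], by simp, by simp, by simp [ht, neg]⟩
              | cons m s' =>
                  have hC : Crel (i, false) (neg m) := hhd (neg m) (by rw [ht]; simp)
                  have hmi : m ≤ i := hC.2.1 rfl rfl
                  refine ⟨[], i :: m :: s', by simp, ?_, by simp [ht, neg]⟩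
                  rw [List.pairwise_cons]
                  refine ⟨?_, hs⟩
                  intro b hb
                  rcases List.mem_cons.mp hb with rfl | hb
                  · exact hmi
                  · exact le_trans (List.rel_of_pairwise_cons hs hb) hmi

/-- For a word `w` over `{x_0^{±1}, x_1^{±1}}` of length `n`, the standard form of `w`
is `p q⁻¹` with `p`, `q` MP-words, of total length `n`, with all subscripts at most `n`. -/
theorem standard_form_of_word_on_two_letters (w : Word) (hw : ∀ a ∈ w, a.1 ≤ 1)
    (r : Word) (hr : Relation.ReflTransGen Step w r) (hirr : SigmaIrreducible r) :
    ∃ p q : List ℕ, List.Pairwise (· ≤ ·) p ∧ List.Pairwise (· ≤ ·) q ∧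
      r = p.map pos ++ (q.reverse.map neg) ∧
      r.length = w.length ∧
      ∀ a ∈ r, a.1 ≤ w.length := by
  have hinvlen := rtg_inv_len hr
  have hlen : r.length = w.length := hinvlen.2
  have hInvw : WInv w := by
    intro a x c heq
    have hx : x ∈ w := by rw [heq]; simp
    have := hw x hx
    omega
  have hInvr : WInv r := hinvlen.1 hInvw
  obtain ⟨p, s, hp, hs, hstruct⟩ := structure_of_chain r (chain_of_irr r hirr)
  refine ⟨p, s.reverse, hp, ?_, by rw [List.reverse_reverse]; exact hstruct, hlen, ?_⟩
  · rw [List.pairwise_reverse]; exact hs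
  · intro a ha
    obtain ⟨A, B, hAB⟩ := List.append_of_mem ha
    have hb := hInvr A a B hAB
    have hPA := Pc_le A
    have hNB := Nc_le B
    have hL : r.length = A.length + 1 + B.length := by rw [hAB]; simp; omega
    omega
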